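/- Let n ≥ 1 and r > 0. For g = (x',u',ξ') ∈ ℍⁿ = ℝⁿ × ℝⁿ × ℝ define the action g·(z,w,ζ) = (x'+z, u'+w, ξ'+ζ+(1/2)(u'·z − x'·w)) on ℂⁿ × ℂⁿ × ℂ, and for σ in the unitary group U(n), writing σ = a + ib with real n×n matrices a, b, define σ·(z,w,ζ) = (az − bw, aw + bz, ζ). Then the domain Ω_r is invariant under both actions: if (z,w,ζ) ∈ Ω_r then g·(z,w,ζ) ∈ Ω_r for every g ∈ ℍⁿ and σ·(z,w,ζ) ∈ Ω_r for every σ ∈ U(n). -/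
import Mathlib


open Complex

/-- Membership in the domain
`Ω_r = {(z,w,ζ) : (|Im z|² + |Im w|²)² + 16(Im ζ − (1/2)(Re w · Im z − Im w · Re z))² < r⁴}`. -/
def inOmega (n : ℕ) (r : ℝ) (z w : Fin n → ℂ) (ζ : ℂ) : Prop :=
  ((∑ j, (z j).im ^ 2) + ∑ j, (w j).im ^ 2) ^ 2 +
      16 * (ζ.im - (1 / 2) * ((∑ j, (w j).re * (z j).im) - ∑ j, (w j).im * (z j).re)) ^ 2
    < r ^ 4

open Matrix



-- key algebraic identity for mulVec of σ on combined vectors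
lemma key (n : ℕ) (σ : Matrix (Fin n) (Fin n) ℂ) (u v : Fin n → ℂ) (j : Fin n) :
    σ.mulVec (fun k => u k + v k * I) j =
      ((Matrix.of fun i j => ((σ i j).re : ℂ)).mulVec u -
          (Matrix.of fun i j => ((σ i j).im : ℂ)).mulVec v) j
        + (((Matrix.of fun i j => ((σ i j).re : ℂ)).mulVec v +
          (Matrix.of fun i j => ((σ i j).im : ℂ)).mulVec u) j) * I := by
  simp only [Matrix.mulVec, dotProduct, Matrix.of_apply, Pi.sub_apply, Pi.add_apply]
  rw [← Finset.sum_sub_distrib, ← Finset.sum_add_distrib, Finset.sum_mul,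
    ← Finset.sum_add_distrib]
  refine Finset.sum_congr rfl fun k _ => ?_
  apply Complex.ext <;> simp <;> ring

lemma pres (n : ℕ) (σ : Matrix (Fin n) (Fin n) ℂ) (hσ : σ ∈ Matrix.unitaryGroup (Fin n) ℂ)
    (x y : Fin n → ℂ) :
    ∑ j, (starRingEnd ℂ) (σ.mulVec x j) * (σ.mulVec y j)
      = ∑ j, (starRingEnd ℂ) (x j) * (y j) := by
  have h1 : star σ * σ = 1 := hσ.1
  have : star (σ.mulVec x) ⬝ᵥ (σ.mulVec y) = star x ⬝ᵥ y := by
    rw [Matrix.star_mulVec, ← Matrix.dotProduct_mulVec, Matrix.mulVec_mulVec,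
      ← Matrix.star_eq_conjTranspose, h1, Matrix.one_mulVec]
  simpa [dotProduct] using this

lemma reSum (n : ℕ) (c : Fin n → ℂ) :
    (∑ j, (starRingEnd ℂ) (c j) * c j).re = ∑ j, ((c j).re ^ 2 + (c j).im ^ 2) := by
  rw [Complex.re_sum]
  exact Finset.sum_congr rfl fun k _ => by simp [Complex.mul_re, pow_two]

lemma imSum (n : ℕ) (c d : Fin n → ℂ) :
    (∑ j, (starRingEnd ℂ) (c j) * d j).im = ∑ j, ((c j).re * (d j).im - (c j).im * (d j).re) := by
  rw [Complex.im_sum]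
  exact Finset.sum_congr rfl fun k _ => by simp [Complex.mul_im]; ring



/-- `Ω_r` is invariant under the Heisenberg translations and the `U(n)` action. -/
theorem stmt_7 (n : ℕ) (hn : 1 ≤ n) (r : ℝ) (hr : 0 < r) :
    (∀ (x' u' : Fin n → ℝ) (ξ' : ℝ) (z w : Fin n → ℂ) (ζ : ℂ),
      inOmega n r z w ζ →
      inOmega n r (fun j => (x' j : ℂ) + z j) (fun j => (u' j : ℂ) + w j)
        ((ξ' : ℂ) + ζ +
          (1 / 2) * ((∑ j, (u' j : ℂ) * z j) - ∑ j, (x' j : ℂ) * w j))) ∧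
    ∀ σ : Matrix (Fin n) (Fin n) ℂ, σ ∈ Matrix.unitaryGroup (Fin n) ℂ →
      ∀ (z w : Fin n → ℂ) (ζ : ℂ), inOmega n r z w ζ →
      inOmega n r
        ((Matrix.of fun i j => ((σ i j).re : ℂ)).mulVec z -
          (Matrix.of fun i j => ((σ i j).im : ℂ)).mulVec w)
        ((Matrix.of fun i j => ((σ i j).re : ℂ)).mulVec w +
          (Matrix.of fun i j => ((σ i j).im : ℂ)).mulVec z) ζ := by
  constructor
  · intro x' u' ξ' z w ζ h
    simp only [inOmega] at h ⊢
    have E1 : (∑ j, ((x' j : ℂ) + z j).im ^ 2) = ∑ j, (z j).im ^ 2 := by simp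
    have E2 : (∑ j, ((u' j : ℂ) + w j).im ^ 2) = ∑ j, (w j).im ^ 2 := by simp
    have E3 : ((ξ' : ℂ) + ζ + (1 / 2) * ((∑ j, (u' j : ℂ) * z j) - ∑ j, (x' j : ℂ) * w j)).im
        - (1 / 2) * ((∑ j, ((u' j : ℂ) + w j).re * ((x' j : ℂ) + z j).im)
            - ∑ j, ((u' j : ℂ) + w j).im * ((x' j : ℂ) + z j).re)
        = ζ.im - (1 / 2) * ((∑ j, (w j).re * (z j).im) - ∑ j, (w j).im * (z j).re) := by
      simp [Complex.im_sum, Complex.mul_im, Finset.sum_add_distrib, add_mul, mul_add]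
      rw [show (∑ x, (w x).im * x' x) = ∑ x, x' x * (w x).im from
        Finset.sum_congr rfl fun j _ => mul_comm _ _]
      ring
    rw [E1, E2, E3]
    exact h
  · intro σ hσ z w ζ h
    simp only [inOmega] at h ⊢
    set A := (Matrix.of fun i j => ((σ i j).re : ℂ)) with hAdef
    set B := (Matrix.of fun i j => ((σ i j).im : ℂ)) with hBdef
    set M : Fin n → ℂ := fun k => ((z k).im : ℂ) + ((w k).im : ℂ) * I with hMdef
    set P : Fin n → ℂ := fun k => ((z k).re : ℂ) + ((w k).re : ℂ) * I with hPdef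
    have hM : σ.mulVec M = fun j =>
        ((((A.mulVec z - B.mulVec w) j).im : ℂ) + (((A.mulVec w + B.mulVec z) j).im : ℂ) * I) := by
      funext j; rw [hMdef, key]
      apply Complex.ext <;>
        simp [hAdef, hBdef, Matrix.mulVec, dotProduct, Complex.im_sum, Complex.re_sum,
          Finset.sum_sub_distrib]
    have hP : σ.mulVec P = fun j =>
        ((((A.mulVec z - B.mulVec w) j).re : ℂ) + (((A.mulVec w + B.mulVec z) j).re : ℂ) * I) := by
      funext j; rw [hPdef, key]
      apply Complex.ext <;>
        simp [hAdef, hBdef, Matrix.mulVec, dotProduct, Complex.im_sum, Complex.re_sum,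
          Finset.sum_sub_distrib]
    have hre : ∀ j, ((σ.mulVec M) j).re = ((A.mulVec z - B.mulVec w) j).im := fun j => by
      rw [congrFun hM j]; simp
    have him : ∀ j, ((σ.mulVec M) j).im = ((A.mulVec w + B.mulVec z) j).im := fun j => by
      rw [congrFun hM j]; simp
    have hre' : ∀ j, ((σ.mulVec P) j).re = ((A.mulVec z - B.mulVec w) j).re := fun j => by
      rw [congrFun hP j]; simp
    have him' : ∀ j, ((σ.mulVec P) j).im = ((A.mulVec w + B.mulVec z) j).re := fun j => by
      rw [congrFun hP j]; simp
    have hA : ((∑ j, ((A.mulVec z - B.mulVec w) j).im ^ 2) +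
        ∑ j, ((A.mulVec w + B.mulVec z) j).im ^ 2)
        = (∑ j, (z j).im ^ 2) + ∑ j, (w j).im ^ 2 := by
      have hq := congrArg Complex.re (pres n σ hσ M M)
      rw [reSum, reSum] at hq
      calc ((∑ j, ((A.mulVec z - B.mulVec w) j).im ^ 2) +
            ∑ j, ((A.mulVec w + B.mulVec z) j).im ^ 2)
          = ∑ j, (((σ.mulVec M) j).re ^ 2 + ((σ.mulVec M) j).im ^ 2) := by
            rw [← Finset.sum_add_distrib]
            exact (Finset.sum_congr rfl fun j _ => by rw [hre j, him j]).symm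
        _ = ∑ j, ((M j).re ^ 2 + (M j).im ^ 2) := hq
        _ = (∑ j, (z j).im ^ 2) + ∑ j, (w j).im ^ 2 := by
            rw [Finset.sum_add_distrib]
            congr 1 <;> exact Finset.sum_congr rfl fun j _ => by simp [hMdef]
    have hB : ((∑ j, ((A.mulVec w + B.mulVec z) j).re * ((A.mulVec z - B.mulVec w) j).im) -
        ∑ j, ((A.mulVec w + B.mulVec z) j).im * ((A.mulVec z - B.mulVec w) j).re)
        = (∑ j, (w j).re * (z j).im) - ∑ j, (w j).im * (z j).re := by
      have hq := congrArg Complex.im (pres n σ hσ M P)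
      rw [imSum, imSum] at hq
      calc ((∑ j, ((A.mulVec w + B.mulVec z) j).re * ((A.mulVec z - B.mulVec w) j).im) -
            ∑ j, ((A.mulVec w + B.mulVec z) j).im * ((A.mulVec z - B.mulVec w) j).re)
          = ∑ j, (((σ.mulVec M) j).re * ((σ.mulVec P) j).im
              - ((σ.mulVec M) j).im * ((σ.mulVec P) j).re) := by
            rw [← Finset.sum_sub_distrib]
            exact (Finset.sum_congr rfl fun j _ => by
              rw [hre j, him j, hre' j, him' j]; ring).symm
        _ = ∑ j, ((M j).re * (P j).im - (M j).im * (P j).re) := hq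
        _ = (∑ j, (w j).re * (z j).im) - ∑ j, (w j).im * (z j).re := by
            rw [← Finset.sum_sub_distrib]
            exact Finset.sum_congr rfl fun j _ => by simp [hMdef, hPdef]; ring
    rw [hA, hB]
    exact h
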